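/- Let X be a metric space containing three points that are pairwise at the same positive distance (an equilateral triangle). Then the degree 3 Steiner–Gromov ratio of X equals 3/4: sgr₃(X) = 3/4. In particular, every three-point metric space (M, ρ) satisfies mf(M, ρ) / mst(M, ρ) ≥ 3/4, with equality when all three distances are equal. -/

import Mathlib

open SimpleGraph Finset

structure IsPseudoMetric {M : Type} (ρ : M → M → ℝ) : Prop where
  nonneg : ∀ p q, 0 ≤ ρ p q
  refl : ∀ p, ρ p p = 0
  symm : ∀ p q, ρ p q = ρ q p
  triangle : ∀ p q r, ρ p r ≤ ρ p q + ρ q r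

/-- A tree joining a finite set `M`: a finite tree `G = (V, E)` with an injection `ι : M → V`
such that every vertex of degree 1 or 2 lies in the image of `M`. -/
structure Frame (M : Type) where
  V : Type
  [fin : Fintype V]
  [deq : DecidableEq V]
  G : SimpleGraph V
  [dec : DecidableRel G.Adj]
  tree : G.IsTree
  ι : M → V
  inj : Function.Injective ι
  joins : ∀ v : V, G.degree v = 1 ∨ G.degree v = 2 → v ∈ Set.range ι

attribute [instance] Frame.fin Frame.deq Frame.dec

namespace Frame

variable {M : Type}

/-- The unique path between two vertices of the tree. -/
noncomputable def path (F : Frame M) (u v : F.V) : F.G.Walk u v :=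
  (F.tree.existsUnique_path u v).exists.choose

/-- `d_ω(u,v)`: the sum of the weights of the edges of the unique path from `u` to `v`. -/
noncomputable def dist (F : Frame M) (w : Sym2 F.V → ℝ) (u v : F.V) : ℝ :=
  ((F.path u v).edges.map w).sum

/-- `ω(G)`: the total weight of all edges of the tree. -/
noncomputable def weight (F : Frame M) (w : Sym2 F.V → ℝ) : ℝ :=
  ∑ e ∈ F.G.edgeFinset, w e

/-- `(G, ω)` is a filling of `(M, ρ)`: nonnegative weights and `ρ p q ≤ d_ω(ι p, ι q)`. -/
def IsFilling (F : Frame M) (w : Sym2 F.V → ℝ) (ρ : M → M → ℝ) : Prop :=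
  (∀ e ∈ F.G.edgeFinset, 0 ≤ w e) ∧
  ∀ p q : M, ρ p q ≤ F.dist w (F.ι p) (F.ι q)

end Frame

/-- `mf(M,ρ)`: the infimum of weights of fillings of `(M, ρ)`. -/
noncomputable def mf {M : Type} (ρ : M → M → ℝ) : ℝ :=
  sInf { x | ∃ F : Frame M, ∃ w : Sym2 F.V → ℝ, F.IsFilling w ρ ∧ F.weight w = x }

/-- A minimal filling: a filling whose weight equals `mf(M,ρ)`. -/
def IsMinFilling {M : Type} (F : Frame M) (w : Sym2 F.V → ℝ) (ρ : M → M → ℝ) : Prop :=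
  F.IsFilling w ρ ∧ F.weight w = mf ρ

/- `mst(N,d)`: the length of a minimal spanning tree of a finite pseudo-metric space `(N, d)`:
the minimum over all spanning trees of the complete graph on `N` of the sum of the
lengths of their edges (each edge counted once, via the symmetrized double sum). -/
open Classical in
noncomputable def mstW {N : Type} [Fintype N] (d : N → N → ℝ) : ℝ :=
  sInf { x | ∃ H : SimpleGraph N, H.IsTree ∧
    x = (∑ u : N, ∑ v : N, if H.Adj u v then d u v else 0) / 2 }

/-- The degree `n` Steiner–Gromov ratio of a space `X` with distance function `d`. -/
noncomputable def sgrN {X : Type} (d : X → X → ℝ) (n : ℕ) : ℝ :=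
  sInf { r | ∃ S : Finset X, 2 ≤ S.card ∧ S.card ≤ n ∧
    r = mf (fun p q : S => d p.1 q.1) / mstW (fun p q : S => d p.1 q.1) }

-- ==== my additions ====
lemma isolated_eq {V : Type} {H : SimpleGraph V} {u v : V} (h : ∀ z, ¬H.Adj u z)
    (r : H.Reachable u v) : u = v := by
  obtain ⟨w⟩ := r
  cases w with
  | nil => rfl
  | cons h' _ => exact absurd h' (h _)

lemma acyclic_of_card_le_two {V : Type} [Fintype V] {G : SimpleGraph V} [Fintype G.edgeSet]
    (h : G.edgeFinset.card ≤ 2) : G.IsAcyclic := by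
  intro v c hc
  have h1 := hc.three_le_length
  have h2 := hc.isTrail.length_le_card_edgeFinset
  omega

lemma reachable_delete_of_not_mem {V : Type} {G : SimpleGraph V} {u v : V}
    (W : G.Walk u v) {e : Sym2 V} (he : e ∉ W.edges) :
    (G.deleteEdges {e}).Reachable u v :=
  ⟨W.toDeleteEdges {e} (fun e' h' => by rintro rfl; exact he h')⟩

lemma not_reachable_delete_of_trail {V : Type} {G : SimpleGraph V} (hG : G.IsAcyclic)
    {u v : V} (W : G.Walk u v) (hW : W.IsTrail) {e : Sym2 V} (he : e ∈ W.edges) :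
    ¬ (G.deleteEdges {e}).Reachable u v := by
  induction W with
  | nil => simp at he
  | @cons a b c h W ih =>
    rw [SimpleGraph.Walk.edges_cons] at he
    rw [SimpleGraph.Walk.isTrail_cons] at hW
    intro hr
    rcases List.mem_cons.mp he with rfl | he'
    · have hbr : G.IsBridge s(a,b) := (isAcyclic_iff_forall_adj_isBridge.mp hG) h
      have h2 : (G.deleteEdges {s(a,b)}).Reachable b c :=
        reachable_delete_of_not_mem W hW.2
      exact (isBridge_iff.mp hbr) (hr.trans h2.symm)
    · have hab : (G.deleteEdges {e}).Adj a b := by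
        rw [SimpleGraph.deleteEdges_adj]
        refine ⟨h, ?_⟩
        simp only [Set.mem_singleton_iff]
        rintro rfl
        exact hW.2 he'
      exact ih hW.1 he' (hab.symm.reachable.trans hr)

lemma reachable_delete_endpoint {V : Type} {G : SimpleGraph V} {x y z : V}
    (W : G.Walk z x) (e : Sym2 V) (hexy : e = s(x,y)) :
    (G.deleteEdges {e}).Reachable z x ∨ (G.deleteEdges {e}).Reachable z y := by
  induction W with
  | nil => exact Or.inl (Reachable.refl _)
  | @cons a b c h W ih =>
    by_cases hsab : s(a, b) = e
    · rw [hexy] at hsab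
      rw [Sym2.eq_iff] at hsab
      rcases hsab with ⟨rfl, rfl⟩ | ⟨rfl, rfl⟩
      · exact Or.inl (Reachable.refl _)
      · exact Or.inr (Reachable.refl _)
    · have hab : (G.deleteEdges {e}).Adj a b := by
        rw [SimpleGraph.deleteEdges_adj]
        exact ⟨h, by simp only [Set.mem_singleton_iff]; exact hsab⟩
      rcases ih hexy with h1 | h1
      · exact Or.inl (hab.reachable.trans h1)
      · exact Or.inr (hab.reachable.trans h1)

namespace Frame
variable {M : Type}

lemma path_isPath (F : Frame M) (u v : F.V) : (F.path u v).IsPath :=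
  (F.tree.existsUnique_path u v).exists.choose_spec

lemma path_unique (F : Frame M) {u v : F.V} (q : F.G.Walk u v) (hq : q.IsPath) :
    q = F.path u v :=
  (F.tree.existsUnique_path u v).unique hq (F.path_isPath u v)

lemma path_self (F : Frame M) (u : F.V) : F.path u u = SimpleGraph.Walk.nil :=
  (F.path_unique SimpleGraph.Walk.nil SimpleGraph.Walk.IsPath.nil).symm

lemma dist_self (F : Frame M) (w : Sym2 F.V → ℝ) (u : F.V) : F.dist w u u = 0 := by
  rw [Frame.dist, F.path_self]
  simp

lemma dist_eq_sum (F : Frame M) (w : Sym2 F.V → ℝ) (u v : F.V) :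
    F.dist w u v = ∑ e ∈ F.G.edgeFinset, if e ∈ (F.path u v).edges then w e else 0 := by
  classical
  have h1 : F.G.edgeFinset.filter (· ∈ (F.path u v).edges) = (F.path u v).edges.toFinset := by
    ext e
    simp only [Finset.mem_filter, List.mem_toFinset, SimpleGraph.mem_edgeFinset]
    exact ⟨fun h => h.2, fun h => ⟨(F.path u v).edges_subset_edgeSet h, h⟩⟩
  rw [Frame.dist, ← Finset.sum_filter, h1,
    List.sum_toFinset _ ((F.path_isPath u v).isTrail.edges_nodup)]

lemma dist_le_weight (F : Frame M) {w : Sym2 F.V → ℝ}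
    (hw : ∀ e ∈ F.G.edgeFinset, 0 ≤ w e) (u v : F.V) : F.dist w u v ≤ F.weight w := by
  rw [F.dist_eq_sum, Frame.weight]
  apply Finset.sum_le_sum
  intro e he
  split
  · exact le_rfl
  · exact hw e he

lemma not_mem_three_paths (F : Frame M) (p q r : F.V) (e : Sym2 F.V) :
    ¬ (e ∈ (F.path p q).edges ∧ e ∈ (F.path p r).edges ∧ e ∈ (F.path q r).edges) := by
  rintro ⟨h1, h2, h3⟩
  have heE : e ∈ F.G.edgeSet := (F.path p q).edges_subset_edgeSet h1
  induction e using Sym2.ind with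
  | _ x y =>
  have hnpq := not_reachable_delete_of_trail F.tree.IsAcyclic _ (F.path_isPath p q).isTrail h1
  have hnpr := not_reachable_delete_of_trail F.tree.IsAcyclic _ (F.path_isPath p r).isTrail h2
  have hnqr := not_reachable_delete_of_trail F.tree.IsAcyclic _ (F.path_isPath q r).isTrail h3
  have hside : ∀ z : F.V, (F.G.deleteEdges {s(x,y)}).Reachable z x ∨
      (F.G.deleteEdges {s(x,y)}).Reachable z y := fun z =>
    reachable_delete_endpoint (F.tree.isConnected z x).some s(x,y) rfl
  rcases hside p with hp | hp <;> rcases hside q with hq | hq <;> rcases hside r with hr | hr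
  · exact hnpq (hp.trans hq.symm)
  · exact hnpq (hp.trans hq.symm) |>.elim
  all_goals first
    | exact hnpq (hp.trans hq.symm)
    | exact hnpr (hp.trans hr.symm)
    | exact hnqr (hq.trans hr.symm)

lemma perimeter_le (F : Frame M) {w : Sym2 F.V → ℝ} (hw : ∀ e ∈ F.G.edgeFinset, 0 ≤ w e)
    (p q r : F.V) :
    F.dist w p q + F.dist w p r + F.dist w q r ≤ 2 * F.weight w := by
  classical
  rw [F.dist_eq_sum, F.dist_eq_sum, F.dist_eq_sum, Frame.weight, Finset.mul_sum,
    ← Finset.sum_add_distrib, ← Finset.sum_add_distrib]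
  apply Finset.sum_le_sum
  intro e he
  have hwe := hw e he
  by_cases h1 : e ∈ (F.path p q).edges <;> by_cases h2 : e ∈ (F.path p r).edges <;>
    by_cases h3 : e ∈ (F.path q r).edges
  · exact absurd ⟨h1, h2, h3⟩ (F.not_mem_three_paths p q r e)
  all_goals simp only [h1, h2, h3, if_true, if_false] <;> linarith

end Frame

-- === star graph on Fin 4 ===
def star4 : SimpleGraph (Fin 4) where
  Adj u v := u ≠ v ∧ (u = 3 ∨ v = 3)
  symm := by constructor; intro u v ⟨h1, h2⟩; exact ⟨h1.symm, h2.symm⟩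
  loopless := by constructor; intro u ⟨h1, _⟩; exact h1 rfl

instance : DecidableRel star4.Adj := fun u v =>
  inferInstanceAs (Decidable (u ≠ v ∧ (u = 3 ∨ v = 3)))

lemma star4_edgeFinset : star4.edgeFinset = {s(0,3), s(1,3), s(2,3)} := by decide

lemma star4_isTree : star4.IsTree := by
  constructor
  · rw [connected_iff]
    refine ⟨fun u v => ?_, ⟨0⟩⟩
    have h : ∀ u : Fin 4, star4.Reachable u 3 := by
      intro u
      by_cases h : u = 3
      · subst h; rfl
      · exact SimpleGraph.Adj.reachable ⟨h, Or.inr rfl⟩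
    exact (h u).trans (h v).symm
  · rw [isAcyclic_iff_forall_adj_isBridge]
    intro v w hvw
    have key : ∀ a : Fin 4, a ≠ 3 → ¬ (star4 \ fromEdgeSet {s(a, 3)}).Reachable a 3 := by
      intro a ha hr
      have hiso : ∀ z, ¬ (star4 \ fromEdgeSet {s(a, 3)}).Adj a z := by
        intro z hz
        obtain ⟨⟨hne, h3⟩, hnd⟩ := hz
        rcases h3 with rfl | rfl
        · exact ha rfl
        · exact hnd ((SimpleGraph.fromEdgeSet_adj ..).mpr ⟨rfl, ha⟩)
      obtain ⟨wk⟩ := hr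
      cases wk with
      | nil => exact ha rfl
      | cons h' _ => exact hiso _ h'
    have hb : ∀ a : Fin 4, a ≠ 3 → star4.IsBridge s(a, 3) := by
      intro a ha
      rw [isBridge_iff]
      exact key a ha
    obtain ⟨hne, h3⟩ := hvw
    rcases h3 with rfl | rfl
    · rw [show s((3 : Fin 4), w) = s(w, 3) from Sym2.eq_swap]
      exact hb w (fun hw => hne hw.symm)
    · exact hb v hne

@[reducible] def starFrame {M : Type} (ι : M → Fin 4) (hinj : Function.Injective ι)
    (hr : ∀ v : Fin 4, v ≠ 3 → v ∈ Set.range ι) : Frame M where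
  V := Fin 4
  G := star4
  tree := star4_isTree
  ι := ι
  inj := hinj
  joins := by
    intro v hv
    apply hr
    rintro rfl
    have : star4.degree 3 = 3 := by decide
    omega

lemma starFrame_path {M : Type} (ι : M → Fin 4) (hinj : Function.Injective ι)
    (hr : ∀ v : Fin 4, v ≠ 3 → v ∈ Set.range ι) {u v : Fin 4}
    (hu : u ≠ 3) (hv : v ≠ 3) (huv : u ≠ v) :
    (starFrame ι hinj hr).path u v =
      SimpleGraph.Walk.cons (⟨hu, Or.inr rfl⟩ : star4.Adj u 3)
        (SimpleGraph.Walk.cons (⟨fun h => hv h.symm, Or.inl rfl⟩ : star4.Adj 3 v)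
          SimpleGraph.Walk.nil) := by
  symm
  apply Frame.path_unique
  erw [SimpleGraph.Walk.cons_isPath_iff, SimpleGraph.Walk.cons_isPath_iff]
  refine ⟨⟨SimpleGraph.Walk.IsPath.nil, by simp only [SimpleGraph.Walk.support_nil, List.mem_singleton]; exact fun h => hv h.symm⟩, ?_⟩
  erw [SimpleGraph.Walk.support_cons, SimpleGraph.Walk.support_nil]
  intro hmem
  simp only [List.mem_cons, List.mem_singleton] at hmem
  rcases hmem with h | h | h
  · exact hu h
  · exact huv h
  · simp at h

lemma starFrame_dist {M : Type} (ι : M → Fin 4) (hinj : Function.Injective ι)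
    (hr : ∀ v : Fin 4, v ≠ 3 → v ∈ Set.range ι) (w : Sym2 (Fin 4) → ℝ) {u v : Fin 4}
    (hu : u ≠ 3) (hv : v ≠ 3) (huv : u ≠ v) :
    (starFrame ι hinj hr).dist w u v = w s(u, 3) + w s(3, v) := by
  rw [Frame.dist, starFrame_path ι hinj hr hu hv huv]
  erw [SimpleGraph.Walk.edges_cons, SimpleGraph.Walk.edges_cons]
  simp only [SimpleGraph.Walk.edges_cons, SimpleGraph.Walk.edges_nil, List.map_cons,
    List.map_nil, List.sum_cons, List.sum_nil, add_zero]

lemma mf_bddBelow {M : Type} (ρ : M → M → ℝ) :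
    BddBelow { x | ∃ F : Frame M, ∃ w : Sym2 F.V → ℝ, F.IsFilling w ρ ∧ F.weight w = x } := by
  refine ⟨0, fun x hx => ?_⟩
  obtain ⟨F, w, hf, hw⟩ := hx
  rw [← hw]
  exact Finset.sum_nonneg hf.1

section ThreePoint

variable {M : Type} [Fintype M] {ρ : M → M → ℝ} (h : IsPseudoMetric ρ)
  {a b c : M} (hab : a ≠ b) (hac : a ≠ c) (hbc : b ≠ c)
  (hU : ∀ x : M, x = a ∨ x = b ∨ x = c)

include h hab hac hbc hU in
lemma exists_star_filling :
    ∃ F : Frame M, ∃ w : Sym2 F.V → ℝ, F.IsFilling w ρ ∧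
      F.weight w = (ρ a b + ρ a c + ρ b c) / 2 := by
  classical
  set x := ρ a b with hx
  set y := ρ a c with hy
  set z := ρ b c with hz
  set ι : M → Fin 4 := fun m => if m = a then 0 else if m = b then 1 else 2 with hι
  have hia : ι a = 0 := by simp [hι]
  have hib : ι b = 1 := by simp [hι, Ne.symm hab]
  have hic : ι c = 2 := by simp [hι, Ne.symm hac, Ne.symm hbc]
  have hinj : Function.Injective ι := by
    intro s t hst
    rcases hU s with rfl | rfl | rfl <;> rcases hU t with rfl | rfl | rfl <;>
      first | rfl | (simp only [hia, hib, hic] at hst; exact absurd hst (by decide))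
  have hr : ∀ v : Fin 4, v ≠ 3 → v ∈ Set.range ι := by
    intro v hv
    fin_cases v
    · exact ⟨a, hia⟩
    · exact ⟨b, hib⟩
    · exact ⟨c, hic⟩
    · exact absurd rfl hv
  set w : Sym2 (Fin 4) → ℝ := fun e =>
    if e = s(0,3) then (x + y - z)/2 else if e = s(1,3) then (x + z - y)/2
    else if e = s(2,3) then (y + z - x)/2 else 0 with hw
  have hw0 : w s(0,3) = (x + y - z)/2 := by rw [hw]; simp
  have hw1 : w s(1,3) = (x + z - y)/2 := by
    rw [hw]; simp
  have hw2 : w s(2,3) = (y + z - x)/2 := by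
    rw [hw]; simp
  have hsw : ∀ u : Fin 4, w s(3, u) = w s(u, 3) := fun u => by rw [Sym2.eq_swap]
  have h0 : 0 ≤ (x + y - z)/2 := by
    have := h.triangle b a c
    rw [← h.symm a b] at this
    simp only [← hx, ← hy, ← hz] at this ⊢
    linarith
  have h1 : 0 ≤ (x + z - y)/2 := by
    have := h.triangle a b c
    simp only [← hx, ← hy, ← hz] at this ⊢
    linarith
  have h2 : 0 ≤ (y + z - x)/2 := by
    have := h.triangle a c b
    rw [← h.symm b c] at this
    simp only [← hx, ← hy, ← hz] at this ⊢
    linarith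
  refine ⟨starFrame ι hinj hr, w, ⟨?_, ?_⟩, ?_⟩
  · intro e he
    have he' : e ∈ ({s(0,3), s(1,3), s(2,3)} : Finset (Sym2 (Fin 4))) := by
      rw [← star4_edgeFinset]; exact he
    simp only [Finset.mem_insert, Finset.mem_singleton] at he'
    rcases he' with rfl | rfl | rfl
    · rw [hw0]; exact h0
    · rw [hw1]; exact h1
    · rw [hw2]; exact h2
  · intro p q
    have hFι : (starFrame ι hinj hr).ι = ι := rfl
    rw [hFι]
    by_cases hpq : p = q
    · subst hpq
      rw [h.refl]
      exact le_of_eq ((starFrame ι hinj hr).dist_self w (ι p)).symm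
    · have key : ∀ (u v : Fin 4), u ≠ 3 → v ≠ 3 → u ≠ v →
          (starFrame ι hinj hr).dist w u v = w s(u,3) + w s(3,v) := fun u v h1 h2 h3 =>
        starFrame_dist ι hinj hr w h1 h2 h3
      rcases hU p with rfl | rfl | rfl <;> rcases hU q with rfl | rfl | rfl <;>
        first
        | exact absurd rfl hpq
        | (rw [hia, hib, key 0 1 (by decide) (by decide) (by decide), hsw, hw0, hw1]
           rw [← hx]; linarith)
        | (rw [hib, hia, key 1 0 (by decide) (by decide) (by decide), hsw, hw1, hw0]
           rw [h.symm p q, ← hx]; linarith)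
        | (rw [hia, hic, key 0 2 (by decide) (by decide) (by decide), hsw, hw0, hw2]
           rw [← hy]; linarith)
        | (rw [hic, hia, key 2 0 (by decide) (by decide) (by decide), hsw, hw2, hw0]
           rw [h.symm p q, ← hy]; linarith)
        | (rw [hib, hic, key 1 2 (by decide) (by decide) (by decide), hsw, hw1, hw2]
           rw [← hz]; linarith)
        | (rw [hic, hib, key 2 1 (by decide) (by decide) (by decide), hsw, hw2, hw1]
           rw [h.symm p q, ← hz]; linarith)
  · show ∑ e ∈ star4.edgeFinset, w e = (x + y + z) / 2
    rw [star4_edgeFinset]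
    rw [Finset.sum_insert (by decide), Finset.sum_insert (by decide), Finset.sum_singleton]
    rw [hw0, hw1, hw2]
    ring

end ThreePoint

open Classical in
lemma mstW_bddBelow {N : Type} [Fintype N] {d : N → N → ℝ} (hd : ∀ p q, 0 ≤ d p q) :
    BddBelow { x | ∃ H : SimpleGraph N, H.IsTree ∧
      x = (∑ u : N, ∑ v : N, if H.Adj u v then d u v else 0) / 2 } := by
  refine ⟨0, fun x hx => ?_⟩
  obtain ⟨H, -, rfl⟩ := hx
  have : (0:ℝ) ≤ ∑ u : N, ∑ v : N, if H.Adj u v then d u v else 0 := by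
    apply Finset.sum_nonneg
    intro u _
    apply Finset.sum_nonneg
    intro v _
    split
    · exact hd u v
    · exact le_rfl
  linarith

section ThreePointMst

variable {M : Type} [Fintype M] {ρ : M → M → ℝ} (h : IsPseudoMetric ρ)
  {a m b : M} (ham : a ≠ m) (hab : a ≠ b) (hmb : m ≠ b)
  (hU : ∀ x : M, x = a ∨ x = m ∨ x = b)

include h ham hab hmb hU in
open Classical in
lemma pathTree_mem :
    ∃ H : SimpleGraph M, H.IsTree ∧
      (ρ a m + ρ m b) = (∑ u : M, ∑ v : M, if H.Adj u v then ρ u v else 0) / 2 := by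
  classical
  set H : SimpleGraph M := SimpleGraph.fromEdgeSet {s(a,m), s(m,b)} with hH
  have hadj : ∀ u v : M, H.Adj u v ↔ (s(u,v) = s(a,m) ∨ s(u,v) = s(m,b)) ∧ u ≠ v := by
    intro u v
    rw [hH, SimpleGraph.fromEdgeSet_adj]
    simp [Set.mem_insert_iff]
  have hAam : H.Adj a m := (hadj a m).mpr ⟨Or.inl rfl, ham⟩
  have hAmb : H.Adj m b := (hadj m b).mpr ⟨Or.inr rfl, hmb⟩
  have hNab : ¬ H.Adj a b := by
    rw [hadj]
    rintro ⟨hor, -⟩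
    rcases hor with hh | hh <;> rw [Sym2.eq_iff] at hh
    · rcases hh with ⟨-, h2⟩ | ⟨h1, -⟩
      · exact hmb h2.symm
      · exact ham h1
    · rcases hh with ⟨h1, -⟩ | ⟨h1, -⟩
      · exact ham h1
      · exact hab h1
  have htree : H.IsTree := by
    constructor
    · rw [SimpleGraph.connected_iff]
      refine ⟨fun u v => ?_, ⟨a⟩⟩
      have hm : ∀ u : M, H.Reachable u m := by
        intro u
        rcases hU u with rfl | rfl | rfl
        · exact hAam.reachable
        · rfl
        · exact hAmb.symm.reachable
      exact (hm u).trans (hm v).symm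
    · apply acyclic_of_card_le_two
      have hsub : H.edgeFinset ⊆ ({s(a,m), s(m,b)} : Finset (Sym2 M)) := by
        intro e he
        rw [SimpleGraph.mem_edgeFinset, hH, SimpleGraph.edgeSet_fromEdgeSet] at he
        rcases he.1 with hh | hh
        · rw [hh]
          exact Finset.mem_insert_self _ _
        · rw [Set.mem_singleton_iff] at hh
          rw [hh]
          exact Finset.mem_insert_of_mem (Finset.mem_singleton_self _)
      calc H.edgeFinset.card ≤ ({s(a,m), s(m,b)} : Finset (Sym2 M)).card :=
            Finset.card_le_card hsub
        _ ≤ 2 := (Finset.card_insert_le _ _).trans (by simp)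
  refine ⟨H, htree, ?_⟩
  have hUniv : (Finset.univ : Finset M) = {a, m, b} := by
    ext u
    simpa using hU u
  rw [hUniv]
  have ham' : a ∉ ({m, b} : Finset M) := by simp [ham, hab]
  have hmb' : m ∉ ({b} : Finset M) := by simp [hmb]
  rw [Finset.sum_insert ham', Finset.sum_insert hmb', Finset.sum_singleton,
      Finset.sum_insert ham', Finset.sum_insert hmb', Finset.sum_singleton,
      Finset.sum_insert ham', Finset.sum_insert hmb', Finset.sum_singleton,
      Finset.sum_insert ham', Finset.sum_insert hmb', Finset.sum_singleton]
  rw [if_neg (H.irrefl), if_pos hAam, if_neg hNab, if_pos hAam.symm, if_neg (H.irrefl),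
      if_pos hAmb, if_neg (fun hh => hNab hh.symm), if_pos hAmb.symm, if_neg (H.irrefl)]
  rw [h.symm m a, h.symm b m]
  ring

include h ham hab hmb hU in
open Classical in
lemma mstW_le_path : mstW ρ ≤ ρ a m + ρ m b := by
  obtain ⟨H, htree, hval⟩ := pathTree_mem h ham hab hmb hU
  unfold mstW
  exact csInf_le (mstW_bddBelow h.nonneg) ⟨H, htree, hval⟩

end ThreePointMst

section ThreePointMst2

variable {M : Type} [Fintype M] {ρ : M → M → ℝ} (h : IsPseudoMetric ρ)
  {a b c : M} (hab : a ≠ b) (hac : a ≠ c) (hbc : b ≠ c)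
  (hU : ∀ x : M, x = a ∨ x = b ∨ x = c)

include h hab hac hbc hU in
open Classical in
lemma mst_lower : ∀ x ∈ { x | ∃ H : SimpleGraph M, H.IsTree ∧
      x = (∑ u : M, ∑ v : M, if H.Adj u v then ρ u v else 0) / 2 },
    min (min (ρ a b) (ρ a c)) (ρ b c) ≤ x := by
  rintro x ⟨H, htree, rfl⟩
  obtain ⟨wk⟩ := htree.isConnected.preconnected a b
  cases wk with
  | nil => exact absurd rfl hab
  | @cons _ z _ hadj _ =>
    have hz : a ≠ z := hadj.ne
    have hF : ∀ p : M × M, (0:ℝ) ≤ (if H.Adj p.1 p.2 then ρ p.1 p.2 else 0) := by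
      intro p
      split
      · exact h.nonneg _ _
      · exact le_rfl
    have hprod : (∑ u : M, ∑ v : M, if H.Adj u v then ρ u v else 0)
        = ∑ p : M × M, (if H.Adj p.1 p.2 then ρ p.1 p.2 else 0) := by
      rw [Fintype.sum_prod_type]
    have hne : ((a, z) : M × M) ≠ (z, a) := by
      intro hh
      exact hz (congrArg Prod.fst hh)
    have hpair : ∑ p ∈ ({(a,z), (z,a)} : Finset (M × M)),
        (if H.Adj p.1 p.2 then ρ p.1 p.2 else 0) ≤
        ∑ p : M × M, (if H.Adj p.1 p.2 then ρ p.1 p.2 else 0) :=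
      Finset.sum_le_sum_of_subset_of_nonneg (Finset.subset_univ _)
        (fun p _ _ => hF p)
    rw [Finset.sum_pair hne] at hpair
    simp only [if_pos hadj, if_pos hadj.symm] at hpair
    rw [h.symm z a] at hpair
    have hmin : min (min (ρ a b) (ρ a c)) (ρ b c) ≤ ρ a z := by
      rcases hU z with rfl | rfl | rfl
      · exact absurd hadj (H.irrefl)
      · exact le_trans (min_le_left _ _) (min_le_left _ _)
      · exact le_trans (min_le_left _ _) (min_le_right _ _)
    rw [hprod]
    linarith

include h hab hac hbc hU in
open Classical in
lemma mst_equilateral {t : ℝ} (heq : ∀ u v : M, u ≠ v → ρ u v = t) :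
    ∀ x ∈ { x | ∃ H : SimpleGraph M, H.IsTree ∧
      x = (∑ u : M, ∑ v : M, if H.Adj u v then ρ u v else 0) / 2 }, x = 2 * t := by
  rintro x ⟨H, htree, rfl⟩
  classical
  have hcard : Fintype.card M = 3 := by
    rw [← Finset.card_univ, show (Finset.univ : Finset M) = {a, b, c} from by
      ext u; simpa using hU u]
    rw [Finset.card_insert_of_notMem (by simp [hab, hac]),
      Finset.card_insert_of_notMem (by simp [hbc]), Finset.card_singleton]
  have hedge : H.edgeFinset.card = 2 := by
    have := htree.card_edgeFinset
    omega
  have hinner : ∀ u : M, (∑ v : M, if H.Adj u v then ρ u v else 0)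
      = (H.degree u : ℝ) * t := by
    intro u
    have h1 : (∑ v : M, if H.Adj u v then ρ u v else 0)
        = ∑ v : M, if H.Adj u v then t else 0 := by
      apply Finset.sum_congr rfl
      intro v _
      by_cases hA : H.Adj u v
      · rw [if_pos hA, if_pos hA, heq u v hA.ne]
      · rw [if_neg hA, if_neg hA]
    rw [h1, ← Finset.sum_filter, Finset.sum_const, SimpleGraph.degree,
      SimpleGraph.neighborFinset_eq_filter, nsmul_eq_mul]
  have hsum : (∑ u : M, ∑ v : M, if H.Adj u v then ρ u v else 0)
      = ((∑ u : M, H.degree u : ℕ) : ℝ) * t := by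
    rw [Finset.sum_congr rfl (fun u _ => hinner u)]
    push_cast
    rw [Finset.sum_mul]
  rw [hsum, SimpleGraph.sum_degrees_eq_twice_card_edges, hedge]
  push_cast
  ring

end ThreePointMst2


section ThreePointKey

variable {M : Type} [Fintype M] {ρ : M → M → ℝ} (h : IsPseudoMetric ρ)
  {a b c : M} (hab : a ≠ b) (hac : a ≠ c) (hbc : b ≠ c)
  (hU : ∀ x : M, x = a ∨ x = b ∨ x = c)

include h hab hac hbc hU in
lemma mf_eq_three : mf ρ = (ρ a b + ρ a c + ρ b c) / 2 := by
  obtain ⟨F, w, hfill, hwt⟩ := exists_star_filling h hab hac hbc hU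
  apply le_antisymm
  · exact csInf_le (mf_bddBelow ρ) ⟨F, w, hfill, hwt⟩
  · refine le_csInf ⟨F.weight w, F, w, hfill, rfl⟩ ?_
    rintro x ⟨F', w', hf', rfl⟩
    have hper := F'.perimeter_le hf'.1 (F'.ι a) (F'.ι b) (F'.ι c)
    have h1 := hf'.2 a b
    have h2 := hf'.2 a c
    have h3 := hf'.2 b c
    rw [Frame.weight] at *
    linarith

end ThreePointKey

lemma key3 {M : Type} [Fintype M] (ρ : M → M → ℝ) (h : IsPseudoMetric ρ)
    (hpos : ∀ p q : M, p ≠ q → 0 < ρ p q) (hcard : Fintype.card M = 3) :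
    3 / 4 ≤ mf ρ / mstW ρ ∧
    ((∀ p q p' q' : M, p ≠ q → p' ≠ q' → ρ p q = ρ p' q') →
      mf ρ / mstW ρ = 3 / 4) := by
  classical
  obtain ⟨a, b, c, hab, hac, hbc, hU'⟩ :=
    Finset.card_eq_three.mp (show (Finset.univ : Finset M).card = 3 by rw [Finset.card_univ]; exact hcard)
  have hU : ∀ x : M, x = a ∨ x = b ∨ x = c := by
    intro x
    have : x ∈ (Finset.univ : Finset M) := Finset.mem_univ x
    rw [hU'] at this
    simpa using this
  have hU2 : ∀ x : M, x = b ∨ x = a ∨ x = c := by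
    intro x; rcases hU x with h1 | h1 | h1 <;> tauto
  have hU3 : ∀ x : M, x = a ∨ x = c ∨ x = b := by
    intro x; rcases hU x with h1 | h1 | h1 <;> tauto
  have hmf : mf ρ = (ρ a b + ρ a c + ρ b c) / 2 := mf_eq_three h hab hac hbc hU
  have hle1 : mstW ρ ≤ ρ a b + ρ b c := mstW_le_path h hab hac hbc hU
  have hle2 : mstW ρ ≤ ρ b a + ρ a c := mstW_le_path h (Ne.symm hab) hbc hac hU2
  have hle3 : mstW ρ ≤ ρ a c + ρ c b := mstW_le_path h hac hab (Ne.symm hbc) hU3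
  rw [h.symm b a] at hle2
  rw [h.symm c b] at hle3
  have hmin : 0 < min (min (ρ a b) (ρ a c)) (ρ b c) := by
    rcases lt_min_iff.mpr ⟨lt_min_iff.mpr ⟨hpos a b hab, hpos a c hac⟩, hpos b c hbc⟩ with h'
    exact h'
  have hmstpos : 0 < mstW ρ := by
    have hlow : min (min (ρ a b) (ρ a c)) (ρ b c) ≤ mstW ρ := by
      unfold mstW
      apply le_csInf
      · obtain ⟨H, htree, hval⟩ := pathTree_mem h hab hac hbc hU
        exact ⟨_, H, htree, hval⟩
      · exact mst_lower h hab hac hbc hU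
    linarith
  constructor
  · rw [le_div_iff₀ hmstpos, hmf]
    linarith
  · intro heqH
    have heq : ∀ u v : M, u ≠ v → ρ u v = ρ a b := fun u v huv => heqH u v a b huv hab
    set t := ρ a b with ht
    have htpos : 0 < t := hpos a b hab
    have hmst : mstW ρ = 2 * t := by
      apply le_antisymm
      · have := hle1
        rw [heq b c hbc] at this
        linarith
      · unfold mstW
        apply le_csInf
        · obtain ⟨H, htree, hval⟩ := pathTree_mem h hab hac hbc hU
          exact ⟨_, H, htree, hval⟩
        · intro x hx
          rw [mst_equilateral h hab hac hbc hU heq x hx]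
    rw [hmf, hmst, heq a c hac, heq b c hbc]
    field_simp
    ring

section TwoPoint

lemma top2_isTree : (⊤ : SimpleGraph (Fin 2)).IsTree := by
  constructor
  · rw [connected_iff]
    refine ⟨fun u v => ?_, ⟨0⟩⟩
    by_cases h : u = v
    · subst h; rfl
    · exact SimpleGraph.Adj.reachable h
  · exact acyclic_of_card_le_two (by decide)

variable {M : Type} [Fintype M] {ρ : M → M → ℝ} (h : IsPseudoMetric ρ)
  {a b : M} (hab : a ≠ b) (hU : ∀ x : M, x = a ∨ x = b)

include h hab hU in
lemma exists_edge_filling :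
    ∃ F : Frame M, ∃ w : Sym2 F.V → ℝ, F.IsFilling w ρ ∧ F.weight w = ρ a b := by
  classical
  set ι : M → Fin 2 := fun m => if m = a then 0 else 1 with hι
  have hia : ι a = 0 := by simp [hι]
  have hib : ι b = 1 := by simp [hι, Ne.symm hab]
  have hinj : Function.Injective ι := by
    intro s t hst
    rcases hU s with rfl | rfl <;> rcases hU t with rfl | rfl <;>
      simp_all [hia, hib] <;> exact absurd hst (by decide)
  set F : Frame M := {
    V := Fin 2
    G := ⊤
    tree := top2_isTree
    ι := ι
    inj := hinj
    joins := by
      intro v _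
      fin_cases v
      · exact ⟨a, hia⟩
      · exact ⟨b, hib⟩ } with hF
  set w : Sym2 (Fin 2) → ℝ := fun _ => ρ a b with hw
  have hpath : ∀ (u v : Fin 2) (huv : u ≠ v),
      F.dist w u v = ρ a b := by
    intro u v huv
    have hW : (SimpleGraph.Walk.cons (show (⊤ : SimpleGraph (Fin 2)).Adj u v from huv)
        SimpleGraph.Walk.nil).IsPath := by simp [huv]
    rw [Frame.dist, ← F.path_unique _ hW]
    simp [hw]
  refine ⟨F, w, ⟨fun e _ => h.nonneg a b, ?_⟩, ?_⟩
  · intro p q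
    by_cases hpq : p = q
    · subst hpq
      rw [h.refl]
      exact le_of_eq (F.dist_self w (F.ι p)).symm
    · have hne : ι p ≠ ι q := fun hh => hpq (hinj hh)
      rw [show F.ι = ι from rfl, hpath _ _ hne]
      rcases hU p with rfl | rfl <;> rcases hU q with rfl | rfl
      · exact absurd rfl hpq
      · exact le_rfl
      · exact le_of_eq (h.symm p q)
      · exact absurd rfl hpq
  · show ∑ e ∈ (⊤ : SimpleGraph (Fin 2)).edgeFinset, w e = ρ a b
    rw [show (⊤ : SimpleGraph (Fin 2)).edgeFinset = {s(0,1)} from by decide,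
      Finset.sum_singleton]

include h hab hU in
lemma mf_two_lower : ρ a b ≤ mf ρ := by
  obtain ⟨F0, w0, hf0, hw0⟩ := exists_edge_filling h hab hU
  refine le_csInf ⟨F0.weight w0, F0, w0, hf0, rfl⟩ ?_
  rintro x ⟨F, w, hf, rfl⟩
  exact le_trans (hf.2 a b) (F.dist_le_weight hf.1 _ _)

include h hab hU in
open Classical in
lemma mstW_two : mstW ρ = ρ a b := by
  classical
  have hUniv : (Finset.univ : Finset M) = {a, b} := by
    ext u; simpa using hU u
  -- the edge tree
  set H : SimpleGraph M := SimpleGraph.fromEdgeSet {s(a,b)} with hH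
  have hadj : ∀ u v : M, H.Adj u v ↔ s(u,v) = s(a,b) ∧ u ≠ v := by
    intro u v
    rw [hH, SimpleGraph.fromEdgeSet_adj]
    simp
  have hAab : H.Adj a b := (hadj a b).mpr ⟨rfl, hab⟩
  have htree : H.IsTree := by
    constructor
    · rw [SimpleGraph.connected_iff]
      refine ⟨fun u v => ?_, ⟨a⟩⟩
      have hm : ∀ u : M, H.Reachable u a := by
        intro u
        rcases hU u with rfl | rfl
        · rfl
        · exact hAab.symm.reachable
      exact (hm u).trans (hm v).symm
    · apply acyclic_of_card_le_two
      have hsub : H.edgeFinset ⊆ ({s(a,b)} : Finset (Sym2 M)) := by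
        intro e he
        rw [SimpleGraph.mem_edgeFinset, hH, SimpleGraph.edgeSet_fromEdgeSet] at he
        rw [Set.mem_diff, Set.mem_singleton_iff] at he
        rw [he.1]
        exact Finset.mem_singleton_self _
      exact le_trans (Finset.card_le_card hsub) (by simp)
  have hval : ρ a b = (∑ u : M, ∑ v : M, if H.Adj u v then ρ u v else 0) / 2 := by
    rw [hUniv]
    have hab' : a ∉ ({b} : Finset M) := by simp [hab]
    rw [Finset.sum_insert hab', Finset.sum_singleton, Finset.sum_insert hab',
      Finset.sum_singleton, Finset.sum_insert hab', Finset.sum_singleton]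
    rw [if_neg (H.irrefl), if_pos hAab, if_pos hAab.symm, if_neg (H.irrefl)]
    rw [h.symm b a]
    ring
  apply le_antisymm
  · unfold mstW
    exact csInf_le (mstW_bddBelow h.nonneg) ⟨H, htree, by convert hval⟩
  · unfold mstW
    refine le_csInf ⟨_, H, htree, by convert hval⟩ ?_
    rintro x ⟨H', htree', rfl⟩
    obtain ⟨wk⟩ := htree'.isConnected.preconnected a b
    cases wk with
    | nil => exact absurd rfl hab
    | @cons _ z _ hadj' _ =>
      have hz : a ≠ z := hadj'.ne
      have hadj2 : H'.Adj a b := by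
        rcases hU z with rfl | rfl
        · exact absurd rfl hz
        · exact hadj'
      have hF : ∀ p : M × M, (0:ℝ) ≤ (if H'.Adj p.1 p.2 then ρ p.1 p.2 else 0) := by
        intro p
        split
        · exact h.nonneg _ _
        · exact le_rfl
      have hprod : (∑ u : M, ∑ v : M, if H'.Adj u v then ρ u v else 0)
          = ∑ p : M × M, (if H'.Adj p.1 p.2 then ρ p.1 p.2 else 0) := by
        rw [Fintype.sum_prod_type]
      have hne : ((a, b) : M × M) ≠ (b, a) := by
        intro hh
        exact hab (congrArg Prod.fst hh)
      have hpair : ∑ p ∈ ({(a,b), (b,a)} : Finset (M × M)),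
          (if H'.Adj p.1 p.2 then ρ p.1 p.2 else 0) ≤
          ∑ p : M × M, (if H'.Adj p.1 p.2 then ρ p.1 p.2 else 0) :=
        Finset.sum_le_sum_of_subset_of_nonneg (Finset.subset_univ _)
          (fun p _ _ => hF p)
      rw [Finset.sum_pair hne] at hpair
      simp only [if_pos hadj2, if_pos hadj2.symm] at hpair
      rw [h.symm b a] at hpair
      rw [hprod]
      linarith

include h hab hU in
lemma key2' (hpos : 0 < ρ a b) : 3 / 4 ≤ mf ρ / mstW ρ := by
  have hmst : mstW ρ = ρ a b := mstW_two h hab hU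
  have hmf : ρ a b ≤ mf ρ := mf_two_lower h hab hU
  rw [le_div_iff₀ (by rw [hmst]; exact hpos), hmst]
  linarith

end TwoPoint

theorem stmt17 {X : Type} (d : X → X → ℝ) (hd : IsPseudoMetric d)
    (hpos : ∀ p q : X, p ≠ q → 0 < d p q)
    (a b c : X) (hab : a ≠ b) (hac : a ≠ c) (hbc : b ≠ c)
    (h1 : d a b = d a c) (h2 : d a c = d b c) :
    sgrN d 3 = 3 / 4 ∧
    ∀ (M : Type) [Fintype M] (ρ : M → M → ℝ), IsPseudoMetric ρ →
      (∀ p q : M, p ≠ q → 0 < ρ p q) → Fintype.card M = 3 →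
      3 / 4 ≤ mf ρ / mstW ρ ∧
      ((∀ p q p' q' : M, p ≠ q → p' ≠ q' → ρ p q = ρ p' q') →
        mf ρ / mstW ρ = 3 / 4) := by
  classical
  constructor
  · -- sgrN d 3 = 3/4
    have hlb : ∀ r ∈ { r | ∃ S : Finset X, 2 ≤ S.card ∧ S.card ≤ 3 ∧
        r = mf (fun p q : S => d p.1 q.1) / mstW (fun p q : S => d p.1 q.1) },
        (3/4 : ℝ) ≤ r := by
      rintro r ⟨S, hS2, hS3, rfl⟩
      have hps : IsPseudoMetric (fun p q : S => d p.1 q.1) :=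
        ⟨fun p q => hd.nonneg _ _, fun p => hd.refl _, fun p q => hd.symm _ _,
         fun p q r => hd.triangle _ _ _⟩
      have hposS : ∀ p q : S, p ≠ q → 0 < d p.1 q.1 :=
        fun p q hne => hpos p.1 q.1 (fun hh => hne (Subtype.ext hh))
      have hcardS : Fintype.card S = S.card := Fintype.card_coe S
      have hcases : S.card = 2 ∨ S.card = 3 := by omega
      rcases hcases with hc | hc
      · obtain ⟨u, v, huv, hSuv⟩ := Finset.card_eq_two.mp hc
        have hu : u ∈ S := by rw [hSuv]; simp
        have hv : v ∈ S := by rw [hSuv]; simp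
        have hUS : ∀ x : S, x = ⟨u, hu⟩ ∨ x = ⟨v, hv⟩ := by
          rintro ⟨x, hx⟩
          rw [hSuv] at hx
          simp only [Finset.mem_insert, Finset.mem_singleton] at hx
          rcases hx with rfl | rfl
          · exact Or.inl rfl
          · exact Or.inr rfl
        exact key2' hps (fun hh => huv (congrArg Subtype.val hh)) hUS (hpos u v huv)
      · obtain ⟨u, v, t, huv, hut, hvt, hSuv⟩ := Finset.card_eq_three.mp hc
        exact (key3 _ hps hposS (hcardS.trans hc)).1
    have hmem : (3/4 : ℝ) ∈ { r | ∃ S : Finset X, 2 ≤ S.card ∧ S.card ≤ 3 ∧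
        r = mf (fun p q : S => d p.1 q.1) / mstW (fun p q : S => d p.1 q.1) } := by
      have hCard : ({a, b, c} : Finset X).card = 3 := by
        rw [Finset.card_insert_of_notMem (by simp [hab, hac]),
          Finset.card_insert_of_notMem (by simp [hbc]), Finset.card_singleton]
      refine ⟨{a, b, c}, ?_, ?_, ?_⟩
      · rw [hCard]; norm_num
      · exact le_of_eq hCard
      · set S : Finset X := {a, b, c} with hSdef
        have hps : IsPseudoMetric (fun p q : S => d p.1 q.1) :=
          ⟨fun p q => hd.nonneg _ _, fun p => hd.refl _, fun p q => hd.symm _ _,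
           fun p q r => hd.triangle _ _ _⟩
        have hposS : ∀ p q : S, p ≠ q → 0 < d p.1 q.1 :=
          fun p q hne => hpos p.1 q.1 (fun hh => hne (Subtype.ext hh))
        have hcardS : Fintype.card S = 3 := by
          rw [Fintype.card_coe, hSdef,
            Finset.card_insert_of_notMem (by simp [hab, hac]),
            Finset.card_insert_of_notMem (by simp [hbc]), Finset.card_singleton]
        have hall : ∀ p q : S, p ≠ q → d p.1 q.1 = d a b := by
          rintro ⟨p, hp⟩ ⟨q, hq⟩ hne
          have hne' : p ≠ q := fun hh => hne (Subtype.ext hh)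
          rw [hSdef] at hp hq
          simp only [Finset.mem_insert, Finset.mem_singleton] at hp hq
          show d p q = d a b
          rcases hp with hpe | hpe | hpe <;> rcases hq with hqe | hqe | hqe
          · exact absurd (hpe.trans hqe.symm) hne'
          · rw [hpe, hqe]
          · rw [hpe, hqe]; exact h1.symm
          · rw [hpe, hqe]; exact hd.symm b a
          · exact absurd (hpe.trans hqe.symm) hne'
          · rw [hpe, hqe]; exact (h1.trans h2).symm
          · rw [hpe, hqe]; exact (hd.symm c a).trans h1.symm
          · rw [hpe, hqe]; exact (hd.symm c b).trans (h1.trans h2).symm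
          · exact absurd (hpe.trans hqe.symm) hne'
        have heqs : ∀ p q p' q' : S, p ≠ q → p' ≠ q' →
            d p.1 q.1 = d p'.1 q'.1 := fun p q p' q' hh hh' =>
          (hall p q hh).trans (hall p' q' hh').symm
        exact ((key3 _ hps hposS hcardS).2 heqs).symm
    unfold sgrN
    exact le_antisymm (csInf_le ⟨3/4, fun r hr => hlb r hr⟩ hmem)
      (le_csInf ⟨3/4, hmem⟩ hlb)
  · intro M _ ρ hρ hposM hcardM
    exact key3 ρ hρ hposM hcardM
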